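/- Let M ⊂ ℝ^{3,1} be the timelike graph surface ψ(x,y) = (f(x,y), g(x,y), x, y) (so EG - F² < 0). Then the tangent part of the constant vector e₄ = (0,0,0,1) satisfies ⟨e₄^⊤, e₄^⊤⟩ = E/(EG - F²). Consequently M has a canonical null direction with respect to e₄ if and only if ψ_x is lightlike (E = 0), in which case e₄^⊤ = (1/F)ψ_x. -/
import Mathlib


/-- For the timelike graph surface ψ(x,y) = (f,g,x,y) in ℝ^{3,1} (EG - F² < 0), the
tangent part e₄^⊤ of e₄ = (0,0,0,1) satisfies ⟨e₄^⊤,e₄^⊤⟩ = E/(EG-F²); hence e₄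
defines a canonical null direction (e₄^⊤ lightlike, i.e. nonzero of null norm) iff
ψ_x is lightlike (E = 0), and in that case e₄^⊤ = (1/F)ψ_x. -/
theorem stmt14
    (m : (Fin 4 → ℝ) → (Fin 4 → ℝ) → ℝ)
    (hm : ∀ u v, m u v = -(u 0 * v 0) + u 1 * v 1 + u 2 * v 2 + u 3 * v 3)
    (fx fy gx gy : ℝ)
    (px py e4 : Fin 4 → ℝ)
    (hpx : px = ![fx, gx, 1, 0]) (hpy : py = ![fy, gy, 0, 1])
    (he4 : e4 = ![0, 0, 0, 1])
    (E F G : ℝ)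
    (hE : E = m px px) (hF : F = m px py) (hG : G = m py py)
    (htimelike : E * G - F ^ 2 < 0)
    (e4T : Fin 4 → ℝ) (a b : ℝ)
    (he4T : e4T = a • px + b • py)
    (hproj1 : m e4T px = m e4 px) (hproj2 : m e4T py = m e4 py) :
    m e4T e4T = E / (E * G - F ^ 2)
    ∧ ((e4T ≠ 0 ∧ m e4T e4T = 0) ↔ E = 0)
    ∧ (E = 0 → e4T = F⁻¹ • px) := by
  have hD : E * G - F ^ 2 ≠ 0 := ne_of_lt htimelike
  have h1 : a * E + b * F = 0 := by
    rw [hE, hF]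
    have := hproj1
    simp only [hm, he4T, he4, hpx, hpy, Pi.add_apply, Pi.smul_apply, smul_eq_mul,
      Matrix.cons_val_zero, Matrix.cons_val_one, Matrix.head_cons,
      Matrix.cons_val_two, Matrix.tail_cons, Matrix.cons_val_three] at this ⊢
    linear_combination this
  have h2 : a * F + b * G = 1 := by
    rw [hF, hG]
    have := hproj2
    simp only [hm, he4T, he4, hpx, hpy, Pi.add_apply, Pi.smul_apply, smul_eq_mul,
      Matrix.cons_val_zero, Matrix.cons_val_one, Matrix.head_cons,
      Matrix.cons_val_two, Matrix.tail_cons, Matrix.cons_val_three] at this ⊢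
    linear_combination this
  have hb : b * (E * G - F ^ 2) = E := by linear_combination E * h2 - F * h1
  have hP : m e4T e4T = b := by
    have : m e4T e4T = a * (a * E + b * F) + b * (a * F + b * G) := by
      rw [hE, hF, hG]
      simp only [hm, he4T, hpx, hpy, Pi.add_apply, Pi.smul_apply, smul_eq_mul,
        Matrix.cons_val_zero, Matrix.cons_val_one, Matrix.head_cons,
        Matrix.cons_val_two, Matrix.tail_cons, Matrix.cons_val_three]
      ring
    rw [this, h1, h2]; ring
  have goal1 : m e4T e4T = E / (E * G - F ^ 2) := by
    rw [hP, eq_div_iff hD]; exact hb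
  refine ⟨goal1, ?_, ?_⟩
  · constructor
    · rintro ⟨hne, h0⟩
      rw [hP] at h0
      rw [← hb, h0, zero_mul]
    · intro hE0
      have hb0 : b = 0 := by
        have h := hb
        have hD' := hD
        rw [hE0] at h hD'
        exact (mul_eq_zero.mp h).resolve_right hD'
      have haF : a * F = 1 := by linear_combination h2 - G * hb0
      refine ⟨?_, by rw [hP, hb0]⟩
      intro h
      have h2' := congrFun h 2
      simp [he4T, hpx, hpy, hb0] at h2'
      rw [h2'] at haF
      simp at haF
  · intro hE0
    have hb0 : b = 0 := by
      have h := hb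
      have hD' := hD
      rw [hE0] at h hD'
      exact (mul_eq_zero.mp h).resolve_right hD'
    have hF0 : F ≠ 0 := by
      intro h; rw [hE0, h] at htimelike; simp at htimelike
    have haF : a * F = 1 := by linear_combination h2 - G * hb0
    have ha : a = F⁻¹ := by field_simp at haF ⊢; linarith [haF]
    rw [he4T, hb0, ha, zero_smul, add_zero]
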